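/- Assume L ⊆ Σ^ω is recognized by some deterministic co-Büchi automaton. Then the canonical automaton A_{≡_L} accepts exactly L, i.e., L(A_{≡_L}) = L. -/

import Mathlib

open Classical

/-- Rank of a transition in a co-Büchi automaton: `one` or `two`. -/
inductive Rk | one | two
deriving DecidableEq

/-- A co-Büchi automaton over alphabet `A` with state type `Q`:
initial states and a transition relation where each transition carries a rank. -/
structure CoBuchi (A : Type) (Q : Type) where
  init : Set Q
  delta : Set (Q × A × Rk × Q)

namespace CoBuchi

variable {A Q : Type}

/-- Every state has an outgoing transition on every letter. -/
def Total (M : CoBuchi A Q) : Prop :=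
  ∀ q a, ∃ r q', (q, a, r, q') ∈ M.delta

/-- The prefix `α[0..n-1]` of an infinite word. -/
def prefW (α : ℕ → A) (n : ℕ) : List A := (List.range n).map α

/-- The infinite word `a·w`. -/
def consW (a : A) (w : ℕ → A) : ℕ → A := fun n => match n with
  | 0 => a
  | Nat.succ k => w k

/-- `L(M,q)`: infinite words having a run from `q` with only finitely many rank-1
transitions. -/
def LangFrom (M : CoBuchi A Q) (q : Q) : Set (ℕ → A) :=
  { w | ∃ (ρ : ℕ → Q) (r : ℕ → Rk), ρ 0 = q ∧
        (∀ n, (ρ n, w n, r n, ρ (n + 1)) ∈ M.delta) ∧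
        ∃ N, ∀ n, N ≤ n → r n = Rk.two }

/-- `L(M)`: the language of the automaton. -/
def Lang (M : CoBuchi A Q) : Set (ℕ → A) :=
  { w | ∃ q ∈ M.init, w ∈ M.LangFrom q }

/-- `q →₂^w q'`: a finite run from `q` to `q'` on `w` using only rank-2 transitions. -/
def SafeReach (M : CoBuchi A Q) : Q → List A → Q → Prop
  | q, [], q' => q = q'
  | q, a :: w, q' => ∃ p, (q, a, Rk.two, p) ∈ M.delta ∧ SafeReach M p w q'

/-- A finite run from `q` to `q'` on `w` using transitions of any rank. -/
def Reach (M : CoBuchi A Q) : Q → List A → Q → Prop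
  | q, [], q' => q = q'
  | q, a :: w, q' => ∃ r p, (q, a, r, p) ∈ M.delta ∧ Reach M p w q'

/-- Safe language of a state. -/
def Lsf (M : CoBuchi A Q) (q : Q) : Set (List A) := { w | ∃ q', M.SafeReach q w q' }

/-- Semantically-deterministic: every transition respects residuals. -/
def SemDet (M : CoBuchi A Q) : Prop :=
  ∀ p a rk q, (p, a, rk, q) ∈ M.delta →
    M.LangFrom q = { w | consW a w ∈ M.LangFrom p }

/-- Unsafe-saturated: all residual-respecting rank-1 transitions are present. -/
def UnsafeSat (M : CoBuchi A Q) : Prop :=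
  ∀ p a q, M.LangFrom q = { w | consW a w ∈ M.LangFrom p } →
    (p, a, Rk.one, q) ∈ M.delta

/-- Safe-deterministic: at most one rank-2 transition per state and letter. -/
def SafeDet (M : CoBuchi A Q) : Prop :=
  ∀ p a q q', (p, a, Rk.two, q) ∈ M.delta → (p, a, Rk.two, q') ∈ M.delta → q = q'

/-- Normalized: every rank-2 transition can be completed to a rank-2 loop. -/
def Normalized (M : CoBuchi A Q) : Prop :=
  ∀ q a q', (q, a, Rk.two, q') ∈ M.delta → ∃ x, M.SafeReach q' x q

/-- Deterministic: one initial state, exactly one transition per state and letter. -/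
def Deterministic (M : CoBuchi A Q) : Prop :=
  (∃! q, q ∈ M.init) ∧ ∀ p a, ∃! t : Rk × Q, (p, a, t.1, t.2) ∈ M.delta

/-- History-deterministic: a strategy `σ : Σ* → Q` resolving the nondeterminism,
whose run on every `α ∈ L(M)` can be ranked with finitely many rank-1 transitions. -/
def HistoryDet (M : CoBuchi A Q) : Prop :=
  ∃ σ : List A → Q, σ [] ∈ M.init ∧
    (∀ w a, ∃ rk, (σ w, a, rk, σ (w ++ [a])) ∈ M.delta) ∧
    ∀ α ∈ M.Lang, ∃ r : ℕ → Rk,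
      (∀ n, (σ (prefW α n), α n, r n, σ (prefW α (n + 1))) ∈ M.delta) ∧
      ∃ N, ∀ n, N ≤ n → r n = Rk.two

/-- `q` and `q'` are in the same safe SCC (mutually reachable via rank-2 runs). -/
def SameSafeSCC (M : CoBuchi A Q) (q q' : Q) : Prop :=
  (∃ x, M.SafeReach q x q') ∧ (∃ y, M.SafeReach q' y q)

end CoBuchi

section LangDefs

variable {A : Type} [Nonempty A]

/-- The infinite word `u·w`. -/
def appW (u : List A) (w : ℕ → A) : ℕ → A :=
  fun n => if h : n < u.length then u.get ⟨n, h⟩ else w (n - u.length)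

/-- The infinite word `v^ω` (arbitrary if `v = ε`). -/
noncomputable def iterW (v : List A) : ℕ → A :=
  fun n =>
    if h : v = [] then Classical.arbitrary A
    else v.get ⟨n % v.length, Nat.mod_lt _ (List.length_pos_of_ne_nil h)⟩

/-- The ultimately periodic word `u v^ω`. -/
noncomputable def upW (u v : List A) : ℕ → A := appW u (iterW v)

/-- The right congruence `u ∼_L v`. -/
def SimL (L : Set (ℕ → A)) (u v : List A) : Prop :=
  ∀ w : ℕ → A, appW u w ∈ L ↔ appW v w ∈ L

/-- `(u,v) ≈_L ⊥`: `v ≠ ε` and `u(vx)^ω ∉ L` for all `x` with `uvx ∼_L u`. -/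
def ApproxBot (L : Set (ℕ → A)) (u v : List A) : Prop :=
  v ≠ [] ∧ ∀ x : List A, SimL L (u ++ v ++ x) u → upW u (v ++ x) ∉ L

/-- The safe language of a pair: `sfl(u,v) = {x | (u,vx) not ≈_L ⊥}`. -/
def Sfl (L : Set (ℕ → A)) (u v : List A) : Set (List A) :=
  { x | ¬ ApproxBot L u (v ++ x) }

/-- `(u,v) ≡_L (u',v')`. -/
def EquivL (L : Set (ℕ → A)) (u v u' v' : List A) : Prop :=
  SimL L (u ++ v) (u' ++ v') ∧ Sfl L u v = Sfl L u' v'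

/-- `(u,v)` is pointed. -/
def IsPointed (L : Set (ℕ → A)) (u v : List A) : Prop :=
  ¬ ApproxBot L u v ∧
    ∀ u₁ u₂ : List A, SimL L (u₁ ++ u₂) u → ¬ ApproxBot L u₁ (u₂ ++ v) →
      Sfl L u v = Sfl L u₁ (u₂ ++ v)

/-- `(u,v) ≈_L (u',v')` (for pairs with nonempty second components). -/
def ApproxL (L : Set (ℕ → A)) (u v u' v' : List A) : Prop :=
  SimL L u u' ∧ SimL L (u ++ v) (u' ++ v') ∧
    ∀ x : List A, SimL L (u ++ v ++ x) u →
      (upW u (v ++ x) ∈ L ↔ upW u' (v' ++ x) ∈ L)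

/-- `L` is recognized by some (total) deterministic co-Büchi automaton. -/
def DCWRecognizable (L : Set (ℕ → A)) : Prop :=
  ∃ (Q : Type) (_ : Fintype Q) (M : CoBuchi A Q), M.Deterministic ∧ M.Lang = L

/-- IsPointed pairs. -/
def PointedPair (L : Set (ℕ → A)) : Type :=
  { p : List A × List A // IsPointed L p.1 p.2 }

/-- `≡_L` as a setoid on all pairs. -/
def equivLSetoid (L : Set (ℕ → A)) : Setoid (List A × List A) where
  r p q := EquivL L p.1 p.2 q.1 q.2
  iseqv := {
    refl := fun p => ⟨fun w => Iff.rfl, rfl⟩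
    symm := fun h => ⟨fun w => (h.1 w).symm, h.2.symm⟩
    trans := fun h g => ⟨fun w => (h.1 w).trans (g.1 w), h.2.trans g.2⟩ }

/-- `≡_L` as a setoid on pointed pairs. -/
def canonSetoid (L : Set (ℕ → A)) : Setoid (PointedPair L) where
  r p q := EquivL L p.1.1 p.1.2 q.1.1 q.1.2
  iseqv := {
    refl := fun p => ⟨fun w => Iff.rfl, rfl⟩
    symm := fun h => ⟨fun w => (h.1 w).symm, h.2.symm⟩
    trans := fun h g => ⟨fun w => (h.1 w).trans (g.1 w), h.2.trans g.2⟩ }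

/-- States of the canonical automaton: `≡_L`-classes of pointed pairs. -/
def CanonState (L : Set (ℕ → A)) : Type := Quotient (canonSetoid L)

/-- The class `⟦u,v⟧` of a pointed pair. -/
def cls (L : Set (ℕ → A)) (u v : List A) (h : IsPointed L u v) : CanonState L :=
  Quotient.mk (canonSetoid L) ⟨(u, v), h⟩

/-- The canonical automaton `A_{≡_L}`. -/
def canonAut (L : Set (ℕ → A)) : CoBuchi A (CanonState L) where
  init := { s | ∃ (u v : List A) (h : IsPointed L u v),
              s = cls L u v h ∧ SimL L (u ++ v) [] }
  delta := { t |
    (∃ (u v : List A) (h : IsPointed L u v) (h' : IsPointed L u (v ++ [t.2.1])),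
        ¬ ApproxBot L u (v ++ [t.2.1]) ∧
        t.1 = cls L u v h ∧ t.2.2.1 = Rk.two ∧
        t.2.2.2 = cls L u (v ++ [t.2.1]) h') ∨
    (∃ (u v u' v' : List A) (h : IsPointed L u v) (h' : IsPointed L u' v'),
        SimL L (u ++ v ++ [t.2.1]) (u' ++ v') ∧
        t.1 = cls L u v h ∧ t.2.2.1 = Rk.one ∧ t.2.2.2 = cls L u' v' h') }

/-- `θ(u,v)`: states of `A_{≡_L}` reachable by reading `u` from an initial state
(any ranks) and then `v` via rank-2 transitions only. -/
def theta (L : Set (ℕ → A)) (u v : List A) : Set (CanonState L) :=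
  { q | ∃ p₀ ∈ (canonAut L).init, ∃ p,
          (canonAut L).Reach p₀ u p ∧ (canonAut L).SafeReach p v q }

/-- `(u,v)` is supported: `θ(u,v) ≠ ∅`. -/
def Supported (L : Set (ℕ → A)) (u v : List A) : Prop := (theta L u v).Nonempty

/-- `(u,v)` is double-supported: two distinct states of `θ(u,v)` in the same safe SCC. -/
def DoubleSupported (L : Set (ℕ → A)) (u v : List A) : Prop :=
  ∃ q ∈ theta L u v, ∃ q' ∈ theta L u v, q ≠ q' ∧ (canonAut L).SameSafeSCC q q'

/-- `(u,v)` is single-supported. -/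
def SingleSupported (L : Set (ℕ → A)) (u v : List A) : Prop :=
  Supported L u v ∧ ¬ DoubleSupported L u v

/-- `w` concatenated with itself `m` times. -/
def repCat (w : List A) : ℕ → List A
  | 0 => []
  | Nat.succ m => w ++ repCat w m

end LangDefs

section Stmt7Aux

open CoBuchi

variable {A : Type} [Nonempty A]

/-- segment `α[m..m+n-1]`. -/
def segV (α : ℕ → A) (m n : ℕ) : List A := (List.range n).map fun i => α (m + i)

lemma length_segV (α : ℕ → A) (m n : ℕ) : (segV α m n).length = n := by
  simp [segV]

lemma segV_ne_nil (α : ℕ → A) (m n : ℕ) (h : 0 < n) : segV α m n ≠ [] := by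
  intro hc
  have := length_segV α m n
  rw [hc] at this
  simp at this
  omega

lemma prefW_eq_segV (α : ℕ → A) (n : ℕ) : prefW α n = segV α 0 n := by
  simp [segV, prefW]

lemma prefW_zero (α : ℕ → A) : prefW α 0 = [] := by simp [prefW]

lemma prefW_succ (α : ℕ → A) (n : ℕ) : prefW α (n+1) = prefW α n ++ [α n] := by
  simp [prefW, List.range_succ]

lemma segV_zero (α : ℕ → A) (m : ℕ) : segV α m 0 = [] := by simp [segV]

lemma segV_succ (α : ℕ → A) (m n : ℕ) :
    segV α m (n+1) = segV α m n ++ [α (m+n)] := by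
  simp [segV, List.range_succ]

lemma segV_cons (α : ℕ → A) (m n : ℕ) :
    segV α m (n+1) = α m :: segV α (m+1) n := by
  simp only [segV, List.range_succ_eq_map, List.map_cons, List.map_map, Nat.add_zero]
  congr 1
  refine List.map_congr_left (fun i _ => ?_)
  simp only [Function.comp_apply]
  congr 1
  omega

lemma segV_add (α : ℕ → A) (m i j : ℕ) :
    segV α m (i + j) = segV α m i ++ segV α (m + i) j := by
  induction j with
  | zero => simp [segV_zero]
  | succ j ih =>
      rw [show i + (j+1) = (i+j)+1 from rfl, segV_succ, ih, segV_succ,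
        List.append_assoc]
      rw [Nat.add_assoc]

lemma prefW_add (α : ℕ → A) (m n : ℕ) :
    prefW α (m + n) = prefW α m ++ segV α m n := by
  rw [prefW_eq_segV, prefW_eq_segV, segV_add]
  congr 2
  omega

lemma getElem_prefW (α : ℕ → A) (n i : ℕ) (h : i < (prefW α n).length) :
    (prefW α n)[i] = α i := by
  simp [prefW]

lemma length_prefW (α : ℕ → A) (n : ℕ) : (prefW α n).length = n := by simp [prefW]

lemma appW_lt {u : List A} {w : ℕ → A} {n : ℕ} (h : n < u.length) :
    appW u w n = u.get ⟨n, h⟩ := dif_pos h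

lemma appW_ge {u : List A} (w : ℕ → A) {n : ℕ} (h : u.length ≤ n) :
    appW u w n = w (n - u.length) := dif_neg (by omega)

lemma appW_add (u : List A) (w : ℕ → A) (k : ℕ) :
    appW u w (u.length + k) = w k := by
  rw [appW_ge w (Nat.le_add_right _ _)]
  congr 1
  omega

lemma appW_append (u v : List A) (w : ℕ → A) :
    appW (u ++ v) w = appW u (appW v w) := by
  funext n
  rcases lt_or_ge n u.length with h | h
  · rw [appW_lt h, appW_lt (show n < (u ++ v).length by simp; omega)]
    simp [List.getElem_append_left h]
  · rcases lt_or_ge n (u.length + v.length) with h2 | h2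
    · rw [appW_lt (show n < (u ++ v).length by simp; omega), appW_ge (appW v w) h,
        appW_lt (show n - u.length < v.length by omega)]
      simp [List.getElem_append_right h]
    · rw [appW_ge _ (show (u++v).length ≤ n by simp; omega), appW_ge (appW v w) h,
        appW_ge _ (show v.length ≤ n - u.length by omega)]
      congr 1
      simp
      omega

lemma prefW_appW_len (u : List A) (w : ℕ → A) : prefW (appW u w) u.length = u := by
  apply List.ext_getElem
  · simp [prefW]
  · intro i h1 h2
    rw [getElem_prefW, appW_lt h2]
    simp

lemma prefW_appW (u : List A) (w : ℕ → A) (k : ℕ) :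
    prefW (appW u w) (u.length + k) = u ++ prefW w k := by
  induction k with
  | zero => simpa [prefW_zero] using prefW_appW_len u w
  | succ k ih =>
      rw [show u.length + (k+1) = (u.length + k) + 1 from rfl, prefW_succ, ih,
        appW_add, prefW_succ, List.append_assoc]

lemma prefW_shift_eq_segV (α : ℕ → A) (m n : ℕ) :
    prefW (fun k => α (m + k)) n = segV α m n := rfl

lemma appW_prefW_shift (α : ℕ → A) (N : ℕ) :
    appW (prefW α N) (fun k => α (N + k)) = α := by
  funext n
  rcases lt_or_ge n N with h | h
  · rw [appW_lt (show n < (prefW α N).length by simp [length_prefW]; omega)]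
    simp [List.get_eq_getElem, getElem_prefW]
  · rw [appW_ge _ (by rw [length_prefW]; omega)]
    simp only [length_prefW]
    congr 1
    omega

lemma iterW_eq {v : List A} (h : v ≠ []) (n : ℕ) :
    iterW v n = v.get ⟨n % v.length, Nat.mod_lt _ (List.length_pos_iff.mpr h)⟩ :=
  dif_neg h

lemma iterW_lt {v : List A} (h : v ≠ []) {n : ℕ} (hn : n < v.length) :
    iterW v n = v.get ⟨n, hn⟩ := by
  rw [iterW_eq h]
  have e : n % v.length = n := Nat.mod_eq_of_lt hn
  simp [List.get_eq_getElem, e]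

lemma iterW_len_add {v : List A} (h : v ≠ []) (n : ℕ) :
    iterW v (v.length + n) = iterW v n := by
  rw [iterW_eq h, iterW_eq h]
  simp [List.get_eq_getElem, Nat.add_mod_left]

lemma iterW_mul_add {v : List A} (h : v ≠ []) (j n : ℕ) :
    iterW v (j * v.length + n) = iterW v n := by
  induction j with
  | zero => simp
  | succ j ih =>
      have e : (j+1) * v.length + n = v.length + (j * v.length + n) := by ring
      rw [e, iterW_len_add h, ih]

lemma length_repCat (v : List A) (c : ℕ) : (repCat v c).length = c * v.length := by
  induction c with
  | zero => simp [repCat]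
  | succ c ih => simp [repCat, ih]; ring

lemma repCat_add (v : List A) (i j : ℕ) :
    repCat v (i + j) = repCat v i ++ repCat v j := by
  induction i with
  | zero => simp [repCat]
  | succ i ih =>
      rw [show i + 1 + j = (i + j) + 1 by omega]
      simp only [repCat]
      rw [ih, List.append_assoc]

lemma prefW_iterW_take {v : List A} (h : v ≠ []) {i : ℕ} (hi : i ≤ v.length) :
    prefW (iterW v) i = v.take i := by
  apply List.ext_getElem
  · simp [length_prefW]; omega
  · intro k h1 h2
    rw [getElem_prefW, iterW_lt h (by rw [length_prefW] at h1; omega)]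
    simp

lemma segV_iterW_shift {v : List A} (h : v ≠ []) (j n : ℕ) :
    segV (iterW v) (j * v.length) n = prefW (iterW v) n := by
  apply List.ext_getElem
  · simp [length_segV, length_prefW]
  · intro k h1 h2
    rw [getElem_prefW]
    simp only [segV, List.getElem_map, List.getElem_range]
    rw [iterW_mul_add h]

lemma prefW_iterW_repCat {v : List A} (h : v ≠ []) (j : ℕ) :
    prefW (iterW v) (j * v.length) = repCat v j := by
  induction j with
  | zero => simp [prefW_zero, repCat]
  | succ j ih =>
      have e : (j+1) * v.length = v.length + j * v.length := by ring
      rw [e, prefW_add, prefW_iterW_take h (le_refl _), List.take_length]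
      have : segV (iterW v) v.length (j * v.length) = repCat v j := by
        have := segV_iterW_shift h 1 (j * v.length)
        rw [one_mul] at this
        rw [this, ih]
      rw [this]
      rfl

end Stmt7Aux


section Stmt7Det

open CoBuchi

variable {A : Type} [Nonempty A] {Q : Type}

/-- run a list through a transition function -/
def lRun (nx : Q → A → Q) : Q → List A → Q := List.foldl nx

/-- all transitions along the list are safe (rank two) -/
def allSafe (nx : Q → A → Q) (rk : Q → A → Rk) : Q → List A → Prop
  | _, [] => True
  | q, a :: t => rk q a = Rk.two ∧ allSafe nx rk (nx q a) t

lemma lRun_nil (nx : Q → A → Q) (q : Q) : lRun nx q [] = q := rfl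

lemma lRun_append (nx : Q → A → Q) (q : Q) (s t : List A) :
    lRun nx q (s ++ t) = lRun nx (lRun nx q s) t := List.foldl_append ..

lemma allSafe_nil (nx : Q → A → Q) (rk : Q → A → Rk) (q : Q) :
    allSafe nx rk q [] := trivial

lemma allSafe_cons (nx : Q → A → Q) (rk : Q → A → Rk) (q : Q) (a : A) (t : List A) :
    allSafe nx rk q (a :: t) ↔ rk q a = Rk.two ∧ allSafe nx rk (nx q a) t := Iff.rfl

lemma allSafe_append (nx : Q → A → Q) (rk : Q → A → Rk) (q : Q) (s t : List A) :
    allSafe nx rk q (s ++ t) ↔ allSafe nx rk q s ∧ allSafe nx rk (lRun nx q s) t := by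
  induction s generalizing q with
  | nil => simp [allSafe, lRun_nil]
  | cons a s ih =>
      rw [List.cons_append, allSafe_cons, allSafe_cons, ih,
        show lRun nx q (a :: s) = lRun nx (nx q a) s from rfl]
      tauto

/-- data of a deterministic automaton recognizing `L` -/
structure DetData (L : Set (ℕ → A)) (Q : Type) where
  M : CoBuchi A Q
  nx : Q → A → Q
  rk : Q → A → Rk
  qI : Q
  hmem : ∀ q a, (q, a, rk q a, nx q a) ∈ M.delta
  huni : ∀ q a r p, (q, a, r, p) ∈ M.delta → r = rk q a ∧ p = nx q a
  hinit : M.init = {qI}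
  hL : M.Lang = L

variable {L : Set (ℕ → A)}

/-- acceptance from a state, via the canonical run -/
def acceptF (nx : Q → A → Q) (rk : Q → A → Rk) (q : Q) (w : ℕ → A) : Prop :=
  ∃ N, ∀ n, N ≤ n → rk (lRun nx q (prefW w n)) (w n) = Rk.two

lemma run_succ (nx : Q → A → Q) (q : Q) (w : ℕ → A) (n : ℕ) :
    lRun nx q (prefW w (n+1)) = nx (lRun nx q (prefW w n)) (w n) := by
  rw [prefW_succ, lRun_append]
  rfl

lemma langFrom_iff (D : DetData L Q) (q : Q) (w : ℕ → A) :
    w ∈ D.M.LangFrom q ↔ acceptF D.nx D.rk q w := by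
  constructor
  · rintro ⟨ρ, r, h0, hstep, N, hN⟩
    have hr : ∀ n, ρ n = lRun D.nx q (prefW w n) := by
      intro n
      induction n with
      | zero => rw [prefW_zero]; exact h0
      | succ n ih =>
          have := (D.huni _ _ _ _ (hstep n)).2
          rw [run_succ, ← ih, this]
    refine ⟨N, fun n hn => ?_⟩
    have h1 := (D.huni _ _ _ _ (hstep n)).1
    rw [← hr n, ← h1]
    exact hN n hn
  · rintro ⟨N, hN⟩
    refine ⟨fun n => lRun D.nx q (prefW w n), fun n => D.rk (lRun D.nx q (prefW w n)) (w n),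
      ?_, ?_, N, hN⟩
    · show lRun D.nx q (prefW w 0) = q
      rw [prefW_zero]
      rfl
    · intro n
      show (lRun D.nx q (prefW w n), w n, D.rk (lRun D.nx q (prefW w n)) (w n),
        lRun D.nx q (prefW w (n+1))) ∈ D.M.delta
      rw [run_succ]
      exact D.hmem _ _

lemma lang_iff (D : DetData L Q) (w : ℕ → A) :
    w ∈ D.M.Lang ↔ acceptF D.nx D.rk D.qI w := by
  constructor
  · rintro ⟨q, hq, hw⟩
    rw [D.hinit] at hq
    rw [Set.mem_singleton_iff] at hq
    subst hq
    exact (langFrom_iff D _ _).mp hw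
  · intro h
    exact ⟨D.qI, by rw [D.hinit]; rfl, (langFrom_iff D _ _).mpr h⟩

lemma acceptF_appW (nx : Q → A → Q) (rk : Q → A → Rk) (q : Q) (u : List A) (w : ℕ → A) :
    acceptF nx rk q (appW u w) ↔ acceptF nx rk (lRun nx q u) w := by
  constructor
  · rintro ⟨N, hN⟩
    refine ⟨N, fun n hn => ?_⟩
    have := hN (u.length + n) (le_trans hn (Nat.le_add_left _ _))
    rwa [prefW_appW, appW_add, lRun_append] at this
  · rintro ⟨N, hN⟩
    refine ⟨u.length + N, fun n hn => ?_⟩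
    have hk : n = u.length + (n - u.length) := by omega
    rw [hk, prefW_appW, appW_add, lRun_append]
    exact hN _ (by omega)

lemma memL_appW (D : DetData L Q) (u : List A) (w : ℕ → A) :
    appW u w ∈ L ↔ acceptF D.nx D.rk (lRun D.nx D.qI u) w := by
  have h1 : appW u w ∈ D.M.Lang ↔ acceptF D.nx D.rk (lRun D.nx D.qI u) w := by
    rw [lang_iff D, acceptF_appW]
  rwa [D.hL] at h1

lemma simL_refl (u : List A) : SimL L u u := fun _ => Iff.rfl

lemma simL_symm {u v : List A} (h : SimL L u v) : SimL L v u := fun w => (h w).symm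

lemma simL_trans {u v x : List A} (h : SimL L u v) (h2 : SimL L v x) : SimL L u x :=
  fun w => (h w).trans (h2 w)

lemma simL_append_right {u v : List A} (h : SimL L u v) (x : List A) :
    SimL L (u ++ x) (v ++ x) := by
  intro w
  rw [appW_append, appW_append]
  exact h _

lemma simL_of_run_eq (D : DetData L Q) {u v : List A}
    (h : lRun D.nx D.qI u = lRun D.nx D.qI v) : SimL L u v := by
  intro w
  rw [memL_appW D, memL_appW D, h]

lemma lRun_repCat_loop (nx : Q → A → Q) {q : Q} {p : List A} (h : lRun nx q p = q) (c : ℕ) :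
    lRun nx q (repCat p c) = q := by
  induction c with
  | zero => rfl
  | succ c ih => rw [show repCat p (c+1) = p ++ repCat p c from rfl, lRun_append, h, ih]

lemma allSafe_segV (nx : Q → A → Q) (rk : Q → A → Rk) (q0 : Q) (w : ℕ → A) (n₁ len : ℕ)
    (h : ∀ i, i < len → rk (lRun nx q0 (prefW w (n₁ + i))) (w (n₁ + i)) = Rk.two) :
    allSafe nx rk (lRun nx q0 (prefW w n₁)) (segV w n₁ len) := by
  induction len generalizing n₁ with
  | zero => rw [segV_zero]; trivial
  | succ len ih =>
      rw [segV_cons]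
      refine ⟨h 0 (by omega), ?_⟩
      have e : nx (lRun nx q0 (prefW w n₁)) (w n₁) = lRun nx q0 (prefW w (n₁ + 1)) := by
        rw [run_succ]
      rw [e]
      refine ih (n₁ + 1) (fun i hi => ?_)
      have := h (i+1) (by omega)
      rwa [show n₁ + (i+1) = n₁ + 1 + i by omega] at this

lemma safe_of_allSafe_prefW (nx : Q → A → Q) (rk : Q → A → Rk) (q : Q) (w : ℕ → A)
    {n n₂ : ℕ} (hn : n < n₂) (h : allSafe nx rk q (prefW w n₂)) :
    rk (lRun nx q (prefW w n)) (w n) = Rk.two := by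
  have e : prefW w n₂ = (prefW w n ++ [w n]) ++ segV w (n+1) (n₂ - (n+1)) := by
    rw [← prefW_succ, ← prefW_add]
    congr 1
    omega
  rw [e, allSafe_append, allSafe_append] at h
  exact h.1.2.1

lemma allSafe_repCat (nx : Q → A → Q) (rk : Q → A → Rk) {q : Q} {p : List A}
    (hs : allSafe nx rk q p) (hl : lRun nx q p = q) (c : ℕ) :
    allSafe nx rk q (repCat p c) := by
  induction c with
  | zero => trivial
  | succ c ih =>
      rw [show repCat p (c+1) = p ++ repCat p c from rfl, allSafe_append, hl]
      exact ⟨hs, ih⟩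

end Stmt7Det


section Stmt7Core

open CoBuchi

variable {A : Type} [Nonempty A] {Q : Type} {L : Set (ℕ → A)}

lemma loop_realize (D : DetData L Q) {u u' p : List A} {q : Q}
    (hsim : SimL L u' u) (hq : lRun D.nx D.qI u' = q)
    (hsafe : allSafe D.nx D.rk q p) (hloop : lRun D.nx q p = q) (hne : p ≠ []) :
    SimL L (u ++ p) u ∧ upW u p ∈ L := by
  have hLpos : 0 < p.length := List.length_pos_iff.mpr hne
  constructor
  · have h1 : lRun D.nx D.qI (u' ++ p) = lRun D.nx D.qI u' := by
      rw [lRun_append, hq, hloop]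
    have h2 : SimL L (u' ++ p) u' := simL_of_run_eq D h1
    exact simL_trans (simL_trans (simL_append_right (simL_symm hsim) p) h2) hsim
  · show appW u (iterW p) ∈ L
    refine (hsim (iterW p)).mp ?_
    rw [memL_appW D, hq]
    refine ⟨0, fun n _ => ?_⟩
    obtain ⟨j, i, hilt, hn⟩ : ∃ j i, i < p.length ∧ n = j * p.length + i :=
      ⟨n / p.length, n % p.length, Nat.mod_lt _ hLpos,
        by rw [Nat.mul_comm]; exact (Nat.div_add_mod n p.length).symm⟩
    have hpref : prefW (iterW p) n = repCat p j ++ p.take i := by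
      rw [hn, prefW_add, prefW_iterW_repCat hne, segV_iterW_shift hne,
        prefW_iterW_take hne (le_of_lt hilt)]
    have hmod : n % p.length = i := by
      rw [hn, Nat.mul_comm, Nat.mul_add_mod, Nat.mod_eq_of_lt hilt]
    have hit : iterW p n = p.get ⟨i, hilt⟩ := by
      rw [iterW_eq hne]
      simp [List.get_eq_getElem, hmod]
    rw [hpref, lRun_append, lRun_repCat_loop D.nx hloop, hit]
    have hsplit : allSafe D.nx D.rk q (p.take i ++ p.drop i) := by
      rw [List.take_append_drop]
      exact hsafe
    rw [allSafe_append] at hsplit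
    have hdrop : p.drop i = p.get ⟨i, hilt⟩ :: p.drop (i+1) := by
      simp [List.get_eq_getElem]
    rw [hdrop, allSafe_cons] at hsplit
    exact hsplit.2.1

lemma extract_loop (D : DetData L Q) [Finite Q] {u p : List A}
    (hsim : SimL L (u ++ p) u) (hmemL : upW u p ∈ L) (hne : p ≠ []) :
    ∃ (q : Q) (c : ℕ) (u' : List A), 1 ≤ c ∧ SimL L u' u ∧ lRun D.nx D.qI u' = q ∧
      allSafe D.nx D.rk q (repCat p c) ∧ lRun D.nx q (repCat p c) = q := by
  have hLpos : 0 < p.length := List.length_pos_iff.mpr hne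
  have hsimrep : ∀ m, SimL L (u ++ repCat p m) u := by
    intro m
    induction m with
    | zero =>
        show SimL L (u ++ []) u
        rw [List.append_nil]
        exact simL_refl u
    | succ m ih =>
        have e : u ++ repCat p (m+1) = (u ++ p) ++ repCat p m := by
          rw [show repCat p (m+1) = p ++ repCat p m from rfl, List.append_assoc]
        rw [e]
        exact simL_trans (simL_append_right hsim (repCat p m)) ih
  have hacc : acceptF D.nx D.rk (lRun D.nx D.qI u) (iterW p) := by
    rw [← memL_appW D]
    exact hmemL
  obtain ⟨N, hN⟩ := hacc
  obtain ⟨j, j', hjj, hfeq⟩ : ∃ j j', j < j' ∧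
      lRun D.nx (lRun D.nx D.qI u) (prefW (iterW p) ((N+j) * p.length)) =
      lRun D.nx (lRun D.nx D.qI u) (prefW (iterW p) ((N+j') * p.length)) := by
    obtain ⟨j, j', hne2, heq⟩ := Finite.exists_ne_map_eq_of_infinite
      (fun j => lRun D.nx (lRun D.nx D.qI u) (prefW (iterW p) ((N+j) * p.length)))
    rcases Nat.lt_or_ge j j' with h | h
    · exact ⟨j, j', h, heq⟩
    · exact ⟨j', j, by omega, heq.symm⟩
  have hseg : segV (iterW p) ((N+j) * p.length) ((j'-j) * p.length) = repCat p (j'-j) := by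
    rw [segV_iterW_shift hne, prefW_iterW_repCat hne]
  have hNle : N ≤ (N+j) * p.length := by
    calc N ≤ N + j := Nat.le_add_right N j
    _ ≤ (N+j) * p.length := Nat.le_mul_of_pos_right _ hLpos
  refine ⟨lRun D.nx (lRun D.nx D.qI u) (prefW (iterW p) ((N+j) * p.length)), j' - j,
    u ++ repCat p (N+j), by omega, hsimrep _, ?_, ?_, ?_⟩
  · rw [prefW_iterW_repCat hne, lRun_append]
  · have hall := allSafe_segV D.nx D.rk (lRun D.nx D.qI u) (iterW p)
      ((N+j) * p.length) ((j'-j) * p.length) (fun i hi => hN _ (by omega))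
    rwa [hseg] at hall
  · rw [← hseg, ← lRun_append, ← prefW_add,
      show (N+j) * p.length + (j'-j) * p.length = (N+j') * p.length from by
        rw [← Nat.add_mul]; congr 1; omega]
    exact hfeq.symm

end Stmt7Core


section Stmt7Sfl

open CoBuchi

variable {A : Type} [Nonempty A] {Q : Type} {L : Set (ℕ → A)}

lemma notBot_nil (L : Set (ℕ → A)) (u : List A) : ¬ ApproxBot L u [] :=
  fun h => h.1 rfl

lemma notBot_iff {u s : List A} :
    ¬ ApproxBot L u s ↔ s = [] ∨ ∃ y, SimL L (u ++ s ++ y) u ∧ upW u (s ++ y) ∈ L := by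
  constructor
  · intro h
    rw [ApproxBot] at h
    push_neg at h
    by_cases hs : s = []
    · exact Or.inl hs
    · exact Or.inr (h hs)
  · rintro (hs | ⟨y, h1, h2⟩) ⟨hne, hall⟩
    · exact hne hs
    · exact hall y h1 h2

lemma mem_Sfl {u v x : List A} : x ∈ Sfl L u v ↔ ¬ ApproxBot L u (v ++ x) := Iff.rfl

lemma sfl_shift (L : Set (ℕ → A)) (u v y : List A) :
    Sfl L u (v ++ y) = {x | y ++ x ∈ Sfl L u v} := by
  ext x
  rw [Set.mem_setOf_eq, mem_Sfl, mem_Sfl, List.append_assoc]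

lemma nil_mem_Sfl_iff {u s : List A} : [] ∈ Sfl L u s ↔ ¬ ApproxBot L u s := by
  rw [mem_Sfl, List.append_nil]

/-- forward direction of the characterization of `Sfl` via the automaton -/
lemma sfl_char_fwd (D : DetData L Q) [Finite Q] {u v x : List A}
    (h : x ∈ Sfl L u v) (hne : v ++ x ≠ []) :
    ∃ (q₂ q₁ q₃ : Q) (z : List A), (∃ u', SimL L u' u ∧ lRun D.nx D.qI u' = q₂) ∧
      allSafe D.nx D.rk q₂ v ∧ lRun D.nx q₂ v = q₁ ∧
      allSafe D.nx D.rk q₁ x ∧ lRun D.nx q₁ x = q₃ ∧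
      allSafe D.nx D.rk q₃ z ∧ lRun D.nx q₃ z = q₂ := by
  rw [mem_Sfl, notBot_iff] at h
  rcases h with h | ⟨y, h1, h2⟩
  · exact absurd h hne
  · have hpne : (v ++ x) ++ y ≠ [] := by
      intro hc
      rcases List.append_eq_nil_iff.mp hc with ⟨ha, _⟩
      exact hne ha
    rw [List.append_assoc] at h1
    obtain ⟨q, c, u', hc, hsim', hrun', hall, hloop⟩ := extract_loop D h1 h2 hpne
    obtain ⟨c', rfl⟩ : ∃ c', c = c' + 1 := ⟨c - 1, by omega⟩
    have e : repCat ((v ++ x) ++ y) (c' + 1) =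
        v ++ (x ++ (y ++ repCat ((v ++ x) ++ y) c')) := by
      rw [show repCat ((v ++ x) ++ y) (c' + 1) = ((v ++ x) ++ y) ++ repCat ((v ++ x) ++ y) c'
        from rfl]
      simp [List.append_assoc]
    rw [e] at hall hloop
    rw [allSafe_append, allSafe_append] at hall
    rw [lRun_append, lRun_append] at hloop
    exact ⟨q, lRun D.nx q v, lRun D.nx (lRun D.nx q v) x, y ++ repCat ((v ++ x) ++ y) c',
      ⟨u', hsim', hrun'⟩, hall.1, rfl, hall.2.1, rfl, hall.2.2, hloop⟩

/-- backward direction -/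
lemma sfl_char_bwd (D : DetData L Q) {u v x z : List A} {q₂ q₁ q₃ : Q}
    (hth : ∃ u', SimL L u' u ∧ lRun D.nx D.qI u' = q₂)
    (hsv : allSafe D.nx D.rk q₂ v) (hlv : lRun D.nx q₂ v = q₁)
    (hsx : allSafe D.nx D.rk q₁ x) (hlx : lRun D.nx q₁ x = q₃)
    (hsz : allSafe D.nx D.rk q₃ z) (hlz : lRun D.nx q₃ z = q₂) :
    x ∈ Sfl L u v := by
  by_cases hvx : v ++ x = []
  · rw [mem_Sfl, hvx]
    exact notBot_nil L u
  · obtain ⟨u', hsim', hrun'⟩ := hth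
    have hsafe : allSafe D.nx D.rk q₂ ((v ++ x) ++ z) := by
      rw [allSafe_append, allSafe_append, lRun_append, hlv, hlx]
      exact ⟨⟨hsv, hsx⟩, hsz⟩
    have hloop : lRun D.nx q₂ ((v ++ x) ++ z) = q₂ := by
      rw [lRun_append, lRun_append, hlv, hlx, hlz]
    have hne : (v ++ x) ++ z ≠ [] := by
      intro hc
      rcases List.append_eq_nil_iff.mp hc with ⟨ha, _⟩
      exact hvx ha
    obtain ⟨hS, hU⟩ := loop_realize D hsim' hrun' hsafe hloop hne
    rw [mem_Sfl, notBot_iff]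
    refine Or.inr ⟨z, ?_, hU⟩
    rwa [List.append_assoc]

lemma sfl_mono (D : DetData L Q) [Finite Q] {u u₁ u₂ : List A} (h : SimL L (u₁ ++ u₂) u)
    (v : List A) : Sfl L u₁ (u₂ ++ v) ⊆ Sfl L u v := by
  intro x hx
  by_cases hvx : v ++ x = []
  · rw [mem_Sfl, hvx]
    exact notBot_nil L u
  · have hne : (u₂ ++ v) ++ x ≠ [] := by
      intro hc
      rcases List.append_eq_nil_iff.mp hc with ⟨hc1, hc2⟩
      rcases List.append_eq_nil_iff.mp hc1 with ⟨_, hc3⟩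
      exact hvx (by rw [hc3, hc2]; rfl)
    obtain ⟨q₂, q₁, q₃, z, ⟨u', hsim', hrun'⟩, hsv, hlv, hsx, hlx, hsz, hlz⟩ :=
      sfl_char_fwd D hx hne
    rw [allSafe_append] at hsv
    refine sfl_char_bwd D (q₂ := lRun D.nx q₂ u₂) (q₁ := q₁) (q₃ := q₃) (z := z ++ u₂)
      ⟨u' ++ u₂, ?_, ?_⟩ hsv.2 ?_ hsx hlx ?_ ?_
    · exact simL_trans (simL_append_right hsim' u₂) h
    · rw [lRun_append, hrun']
    · rw [← lRun_append]
      exact hlv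
    · rw [allSafe_append, hlz]
      exact ⟨hsz, hsv.1⟩
    · rw [lRun_append, hlz]

lemma sfl_prefix (D : DetData L Q) [Finite Q] {u v x y : List A}
    (h : x ++ y ∈ Sfl L u v) : x ∈ Sfl L u v := by
  by_cases hvx : v ++ x = []
  · rw [mem_Sfl, hvx]
    exact notBot_nil L u
  · have hne : v ++ (x ++ y) ≠ [] := by
      intro hc
      rcases List.append_eq_nil_iff.mp hc with ⟨ha, hb⟩
      rcases List.append_eq_nil_iff.mp hb with ⟨hb1, _⟩
      exact hvx (by rw [ha, hb1]; rfl)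
    obtain ⟨q₂, q₁, q₃, z, hth, hsv, hlv, hsx, hlx, hsz, hlz⟩ := sfl_char_fwd D h hne
    rw [allSafe_append] at hsx
    rw [lRun_append] at hlx
    refine sfl_char_bwd D (q₂ := q₂) (q₁ := q₁) (q₃ := lRun D.nx q₁ x) (z := y ++ z)
      hth hsv hlv hsx.1 rfl ?_ ?_
    · rw [allSafe_append, hlx]
      exact ⟨hsx.2, hsz⟩
    · rw [lRun_append, hlx, hlz]

/-- abstract form of safe languages, for finiteness -/
def sflAbs (nx : Q → A → Q) (rk : Q → A → Rk) (S : Set (Q × Q)) (b : Bool) :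
    Set (List A) :=
  {x | (b = true ∧ x = []) ∨ ∃ q₁ q₂ q₃ z, (q₁, q₂) ∈ S ∧ allSafe nx rk q₁ x ∧
    lRun nx q₁ x = q₃ ∧ allSafe nx rk q₃ z ∧ lRun nx q₃ z = q₂}

lemma sfl_eq_sflAbs (D : DetData L Q) [Finite Q] (u v : List A) :
    Sfl L u v = sflAbs D.nx D.rk
      {p : Q × Q | (∃ u', SimL L u' u ∧ lRun D.nx D.qI u' = p.2) ∧
        allSafe D.nx D.rk p.2 v ∧ lRun D.nx p.2 v = p.1} v.isEmpty := by
  ext x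
  constructor
  · intro hx
    by_cases hvx : v ++ x = []
    · rw [List.append_eq_nil_iff] at hvx
      exact Or.inl ⟨by rw [hvx.1]; rfl, hvx.2⟩
    · obtain ⟨q₂, q₁, q₃, z, hth, hsv, hlv, hsx, hlx, hsz, hlz⟩ := sfl_char_fwd D hx hvx
      exact Or.inr ⟨q₁, q₂, q₃, z, ⟨hth, hsv, hlv⟩, hsx, hlx, hsz, hlz⟩
  · rintro (⟨hb, hx⟩ | ⟨q₁, q₂, q₃, z, ⟨hth, hsv, hlv⟩, hsx, hlx, hsz, hlz⟩)
    · rw [List.isEmpty_iff] at hb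
      rw [hx, mem_Sfl, hb]
      exact notBot_nil L u
    · exact sfl_char_bwd D hth hsv hlv hsx hlx hsz hlz

lemma sfl_finite (D : DetData L Q) [Finite Q] :
    (Set.range fun p : List A × List A => Sfl L p.1 p.2).Finite := by
  have hf : (Set.range fun sb : Set (Q × Q) × Bool => sflAbs D.nx D.rk sb.1 sb.2).Finite :=
    Set.finite_range _
  refine hf.subset ?_
  rintro T ⟨⟨u, v⟩, rfl⟩
  exact ⟨({p : Q × Q | (∃ u', SimL L u' u ∧ lRun D.nx D.qI u' = p.2) ∧
    allSafe D.nx D.rk p.2 v ∧ lRun D.nx p.2 v = p.1}, v.isEmpty),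
    (sfl_eq_sflAbs D u v).symm⟩

end Stmt7Sfl


section Stmt7Pointed

open CoBuchi

variable {A : Type} [Nonempty A] {Q : Type} {L : Set (ℕ → A)}

lemma notBot_drop_last (D : DetData L Q) [Finite Q] {u s : List A} {a : A}
    (h : ¬ ApproxBot L u (s ++ [a])) : ¬ ApproxBot L u s := by
  rw [← nil_mem_Sfl_iff] at h ⊢
  rw [sfl_shift] at h
  have h2 : ([] : List A) ++ [a] ∈ Sfl L u s := by simpa using h
  exact sfl_prefix D h2

lemma pointed_extend (D : DetData L Q) [Finite Q] {u v : List A} {a : A}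
    (hp : IsPointed L u v) (hnb : ¬ ApproxBot L u (v ++ [a])) :
    IsPointed L u (v ++ [a]) := by
  refine ⟨hnb, ?_⟩
  intro u₁ u₂ hsim hnb'
  have hnb'' : ¬ ApproxBot L u₁ ((u₂ ++ v) ++ [a]) := by rwa [List.append_assoc]
  have h1 : ¬ ApproxBot L u₁ (u₂ ++ v) := notBot_drop_last D hnb''
  have h2 := hp.2 u₁ u₂ hsim h1
  rw [show u₂ ++ (v ++ [a]) = (u₂ ++ v) ++ [a] from (List.append_assoc u₂ v [a]).symm,
    sfl_shift, sfl_shift, h2]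

lemma pointed_exists (D : DetData L Q) [Finite Q] (u : List A) :
    ∃ p₁ p₂, IsPointed L p₁ p₂ ∧ SimL L (p₁ ++ p₂) u := by
  set Fam : Set (Set (List A)) :=
    {T | ∃ p₁ p₂, (SimL L (p₁ ++ p₂) u ∧ ¬ ApproxBot L p₁ p₂) ∧ T = Sfl L p₁ p₂} with hFam
  have hfin : Fam.Finite := by
    refine (sfl_finite D).subset ?_
    rintro T ⟨p₁, p₂, _, rfl⟩
    exact ⟨(p₁, p₂), rfl⟩
  have hne : Fam.Nonempty :=
    ⟨Sfl L u [], u, [], ⟨by rw [List.append_nil]; exact simL_refl u, notBot_nil L u⟩, rfl⟩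
  obtain ⟨T, hT, hmin⟩ := Set.Finite.exists_minimal hfin hne
  obtain ⟨p₁, p₂, ⟨hsim, hnb⟩, rfl⟩ := hT
  refine ⟨p₁, p₂, ⟨hnb, ?_⟩, hsim⟩
  intro u₁ u₂ hsim₂ hnb₂
  have hsim₃ : SimL L (u₁ ++ (u₂ ++ p₂)) u := by
    rw [← List.append_assoc]
    exact simL_trans (simL_append_right hsim₂ p₂) hsim
  have hsub : Sfl L u₁ (u₂ ++ p₂) ⊆ Sfl L p₁ p₂ := sfl_mono D hsim₂ p₂
  have hmem : Sfl L u₁ (u₂ ++ p₂) ∈ Fam := ⟨u₁, u₂ ++ p₂, ⟨hsim₃, hnb₂⟩, rfl⟩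
  have : id (Sfl L p₁ p₂) = id (Sfl L u₁ (u₂ ++ p₂)) := le_antisymm (hmin hmem hsub) hsub
  simp only [id] at this
  exact this

lemma cls_eq_of_eq {u v v' : List A} (h : IsPointed L u v)
    (h' : IsPointed L u v') (e : v = v') : cls L u v h = cls L u v' h' := by
  subst e
  rfl

lemma equivL_of_cls_eq {u v u' v' : List A} {h : IsPointed L u v} {h' : IsPointed L u' v'}
    (e : cls L u v h = cls L u' v' h') : EquivL L u v u' v' :=
  Quotient.exact e

lemma exists_cls_rep (L : Set (ℕ → A)) (s : CanonState L) : ∃ u v h, s = cls L u v h := by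
  obtain ⟨⟨⟨u, v⟩, h⟩, hq⟩ := Quotient.exists_rep s
  exact ⟨u, v, h, hq.symm⟩

end Stmt7Pointed


section Stmt7Sound

open CoBuchi

variable {A : Type} [Nonempty A] {Q : Type} {L : Set (ℕ → A)}

lemma canon_sound (D : DetData L Q) [Finite Q] : (canonAut L).Lang ⊆ L := by
  intro α hα
  obtain ⟨s₀, hs₀init, ρ, r, hρ0, hstep, N, hsafe⟩ := hα
  have inv1 : ∀ n, ∃ u v, ∃ h : IsPointed L u v, ρ n = cls L u v h ∧
      SimL L (u ++ v) (prefW α n) := by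
    intro n
    induction n with
    | zero =>
        obtain ⟨u, v, h, he, hsim⟩ := hs₀init
        exact ⟨u, v, h, by rw [hρ0]; exact he, by rw [prefW_zero]; exact hsim⟩
    | succ n ih =>
        obtain ⟨u, v, h, hcls, hsim⟩ := ih
        have hst := hstep n
        simp only [canonAut, Set.mem_setOf_eq] at hst
        rcases hst with ⟨u₀, v₀, h₀, h₀', hnb, hsrc, hrk, htgt⟩ |
          ⟨u₀, v₀, u', v', h₀, h', hsim', hsrc, hrk, htgt⟩
        · refine ⟨u₀, v₀ ++ [α n], h₀', htgt, ?_⟩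
          have he : EquivL L u v u₀ v₀ := equivL_of_cls_eq (hcls.symm.trans hsrc)
          have h1 : SimL L (u₀ ++ v₀) (prefW α n) := simL_trans (simL_symm he.1) hsim
          have h2 : SimL L ((u₀ ++ v₀) ++ [α n]) (prefW α (n+1)) := by
            rw [prefW_succ]
            exact simL_append_right h1 [α n]
          rw [← List.append_assoc]
          exact h2
        · refine ⟨u', v', h', htgt, ?_⟩
          have he : EquivL L u v u₀ v₀ := equivL_of_cls_eq (hcls.symm.trans hsrc)
          have h1 : SimL L (u₀ ++ v₀) (prefW α n) := simL_trans (simL_symm he.1) hsim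
          have h2 : SimL L ((u₀ ++ v₀) ++ [α n]) (prefW α (n+1)) := by
            rw [prefW_succ]
            exact simL_append_right h1 [α n]
          exact simL_trans (simL_symm hsim') h2
  obtain ⟨u, v, h, hclsN, hsimN⟩ := inv1 N
  have inv2 : ∀ k, ∀ u' v' (h' : IsPointed L u' v'), ρ (N + k) = cls L u' v' h' →
      Sfl L u' v' = {x | segV α N k ++ x ∈ Sfl L u v} := by
    intro k
    induction k with
    | zero =>
        intro u' v' h' hcls'
        have he : EquivL L u' v' u v := equivL_of_cls_eq (hcls'.symm.trans hclsN)
        rw [he.2]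
        ext x
        simp [segV_zero]
    | succ k ih =>
        intro u' v' h' hcls'
        have hrk2 : r (N + k) = Rk.two := hsafe (N + k) (Nat.le_add_right N k)
        have hst := hstep (N + k)
        simp only [canonAut, Set.mem_setOf_eq] at hst
        rcases hst with ⟨u₀, v₀, h₀, h₀', hnb, hsrc, hrk, htgt⟩ |
          ⟨u₀, v₀, u'', v'', h₀, h'', hsim', hsrc, hrk, htgt⟩
        · have hderiv := ih u₀ v₀ h₀ hsrc
          have he : EquivL L u' v' u₀ (v₀ ++ [α (N+k)]) :=
            equivL_of_cls_eq (hcls'.symm.trans htgt)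
          rw [he.2, sfl_shift, hderiv]
          ext x
          simp only [Set.mem_setOf_eq]
          rw [segV_succ, List.append_assoc]
        · rw [hrk] at hrk2
          exact absurd hrk2 (by decide)
  have hmemseg : ∀ k, segV α N k ∈ Sfl L u v := by
    intro k
    obtain ⟨u', v', h', hq⟩ := exists_cls_rep L (ρ (N + k))
    have h2 := inv2 k u' v' h' hq
    have hnil : ([] : List A) ∈ Sfl L u' v' := nil_mem_Sfl_iff.mpr h'.1
    rw [h2] at hnil
    simpa using hnil
  have hKex : ∀ k, ∃ q : Q, (∃ u', SimL L u' u ∧ lRun D.nx D.qI u' = q) ∧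
      allSafe D.nx D.rk q (v ++ segV α N k) := by
    intro k
    have hmem1 : segV α N (k+1) ∈ Sfl L u v := hmemseg (k+1)
    have hne1 : v ++ segV α N (k+1) ≠ [] := by
      intro hc
      rcases List.append_eq_nil_iff.mp hc with ⟨_, hb⟩
      exact segV_ne_nil α N (k+1) (by omega) hb
    obtain ⟨q₂, q₁, q₃, z, hth, hsv, hlv, hsx, hlx, hsz, hlz⟩ := sfl_char_fwd D hmem1 hne1
    refine ⟨q₂, hth, ?_⟩
    have hall : allSafe D.nx D.rk q₂ (v ++ segV α N (k+1)) := by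
      rw [allSafe_append, hlv]
      exact ⟨hsv, hsx⟩
    have e : v ++ segV α N (k+1) = (v ++ segV α N k) ++ segV α (N+k) 1 := by
      rw [List.append_assoc, ← segV_add]
    rw [e, allSafe_append] at hall
    exact hall.1
  have hKdown : ∀ (q : Q) (j k : ℕ), j ≤ k →
      allSafe D.nx D.rk q (v ++ segV α N k) → allSafe D.nx D.rk q (v ++ segV α N j) := by
    intro q j k hjk hall
    have e : v ++ segV α N k = (v ++ segV α N j) ++ segV α (N+j) (k-j) := by
      rw [List.append_assoc, ← segV_add, show j + (k - j) = k from by omega]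
    rw [e, allSafe_append] at hall
    exact hall.1
  have hQall : ∃ q : Q, (∃ u', SimL L u' u ∧ lRun D.nx D.qI u' = q) ∧
      ∀ k, allSafe D.nx D.rk q (v ++ segV α N k) := by
    by_contra hcon
    push_neg at hcon
    have hch : ∀ q : Q, ∃ k : ℕ, (∃ u', SimL L u' u ∧ lRun D.nx D.qI u' = q) →
        ¬ allSafe D.nx D.rk q (v ++ segV α N k) := by
      intro q
      by_cases hq : ∃ u', SimL L u' u ∧ lRun D.nx D.qI u' = q
      · obtain ⟨k, hk⟩ := hcon q hq
        exact ⟨k, fun _ => hk⟩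
      · exact ⟨0, fun hq' => absurd hq' hq⟩
    choose f hf using hch
    obtain ⟨K, hK⟩ := (Set.finite_range f).bddAbove
    obtain ⟨q, hth, hall⟩ := hKex K
    have hfq : f q ≤ K := hK (Set.mem_range_self q)
    exact hf q hth (hKdown q (f q) K hfq hall)
  obtain ⟨q, ⟨u', hsim', hrun'⟩, hall⟩ := hQall
  have hacc : acceptF D.nx D.rk q (appW v (fun k => α (N + k))) := by
    refine ⟨0, fun n _ => ?_⟩
    have hallp : allSafe D.nx D.rk q (prefW (appW v (fun k => α (N + k))) (v.length + (n+1))) := by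
      rw [prefW_appW, prefW_shift_eq_segV]
      exact hall (n+1)
    exact safe_of_allSafe_prefW D.nx D.rk q _ (by omega) hallp
  have hL1 : appW u' (appW v (fun k => α (N + k))) ∈ L := by
    rw [memL_appW D, hrun']
    exact hacc
  have hL2 : appW u (appW v (fun k => α (N + k))) ∈ L :=
    (hsim' (appW v (fun k => α (N + k)))).mp hL1
  rw [← appW_append] at hL2
  have hL3 : appW (prefW α N) (fun k => α (N + k)) ∈ L :=
    (hsimN (fun k => α (N + k))).mp hL2
  rwa [appW_prefW_shift] at hL3

end Stmt7Sound


section Stmt7Complete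

open CoBuchi

variable {A : Type} [Nonempty A] {Q : Type} {L : Set (ℕ → A)}

lemma canon_complete (D : DetData L Q) [Finite Q] : L ⊆ (canonAut L).Lang := by
  intro α hα
  have hαM : α ∈ D.M.Lang := by rw [D.hL]; exact hα
  obtain ⟨N₀, hN₀⟩ := (lang_iff D α).mp hαM
  obtain ⟨q, hqfib⟩ := Finite.exists_infinite_fiber
    (fun n : ℕ => lRun D.nx D.qI (prefW α (N₀ + n)))
  have hqInf : ((fun n : ℕ => lRun D.nx D.qI (prefW α (N₀ + n))) ⁻¹' {q}).Infinite :=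
    Set.infinite_coe_iff.mp hqfib
  obtain ⟨n₀, hn₀⟩ := hqInf.nonempty
  have hqN : lRun D.nx D.qI (prefW α (N₀ + n₀)) = q :=
    Set.mem_singleton_iff.mp (Set.mem_preimage.mp hn₀)
  set N := N₀ + n₀ with hNdef
  have hrecur : ∀ m, ∃ n, m ≤ n ∧ N₀ ≤ n ∧ lRun D.nx D.qI (prefW α n) = q := by
    intro m
    obtain ⟨b, hb, hgt⟩ := hqInf.exists_gt m
    exact ⟨N₀ + b, by omega, by omega, Set.mem_singleton_iff.mp (Set.mem_preimage.mp hb)⟩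
  -- goodness of the base pair
  have hgood0 : ∀ k, ¬ ApproxBot L (prefW α N) (segV α N k) := by
    intro k
    cases k with
    | zero =>
        rw [segV_zero]
        exact notBot_nil L _
    | succ k =>
        obtain ⟨n', hn'1, hn'2, hn'3⟩ := hrecur (N + (k+1))
        have hallseg : allSafe D.nx D.rk q (segV α N (n' - N)) := by
          have hh := allSafe_segV D.nx D.rk D.qI α N (n' - N)
            (fun i hi => hN₀ (N + i) (by omega))
          rwa [hqN] at hh
        have hloopseg : lRun D.nx q (segV α N (n' - N)) = q := by
          conv_lhs => rw [← hqN, ← lRun_append, ← prefW_add,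
            show N + (n' - N) = n' from by omega]
          rw [hn'3]
        have hnes : segV α N (n' - N) ≠ [] := segV_ne_nil α N _ (by omega)
        obtain ⟨hS, hU⟩ := loop_realize D (simL_refl (prefW α N)) hqN hallseg hloopseg hnes
        rw [notBot_iff]
        have e : segV α N (k+1) ++ segV α (N + (k+1)) (n' - N - (k+1)) = segV α N (n' - N) := by
          rw [← segV_add, show (k+1) + (n' - N - (k+1)) = n' - N from by omega]
        refine Or.inr ⟨segV α (N + (k+1)) (n' - N - (k+1)), ?_, ?_⟩
        · rw [List.append_assoc, e]
          exact hS
        · rw [e]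
          exact hU
  -- minimal good family member
  have hfin : ({T | ∃ p₁ p₂, (SimL L (p₁ ++ p₂) (prefW α N) ∧
      ∀ k, segV α N k ∈ Sfl L p₁ p₂) ∧ T = Sfl L p₁ p₂} : Set (Set (List A))).Finite := by
    refine (sfl_finite D).subset ?_
    rintro T ⟨p₁, p₂, _, rfl⟩
    exact ⟨(p₁, p₂), rfl⟩
  have hmemFam0 : Sfl L (prefW α N) [] ∈
      {T | ∃ p₁ p₂, (SimL L (p₁ ++ p₂) (prefW α N) ∧
        ∀ k, segV α N k ∈ Sfl L p₁ p₂) ∧ T = Sfl L p₁ p₂} := by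
    refine ⟨prefW α N, [], ⟨by rw [List.append_nil]; exact simL_refl _, fun k => ?_⟩, rfl⟩
    rw [mem_Sfl, List.nil_append]
    exact hgood0 k
  obtain ⟨T, hT, hmin⟩ := Set.Finite.exists_minimal hfin ⟨_, hmemFam0⟩
  obtain ⟨us, vs, ⟨hsims, hgoods⟩, rfl⟩ := hT
  -- uniform bound on "bad" witnesses
  obtain ⟨K, hK⟩ : ∃ K : ℕ, ∀ (w₁ w₂ : List A), (∃ k, segV α N k ∉ Sfl L w₁ w₂) →
      ∃ k, k ≤ K ∧ segV α N k ∉ Sfl L w₁ w₂ := by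
    classical
    set g : Set (List A) → ℕ :=
      fun T => if hh : ∃ k, segV α N k ∉ T then hh.choose else 0 with hg
    obtain ⟨K, hK'⟩ := ((sfl_finite D).image g).bddAbove
    refine ⟨K, fun w₁ w₂ hex => ?_⟩
    have hgin : g (Sfl L w₁ w₂) ∈ g '' (Set.range fun p : List A × List A => Sfl L p.1 p.2) :=
      ⟨Sfl L w₁ w₂, ⟨(w₁, w₂), rfl⟩, rfl⟩
    have hle : g (Sfl L w₁ w₂) ≤ K := hK' hgin
    refine ⟨g (Sfl L w₁ w₂), hle, ?_⟩
    simp only [hg]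
    rw [dif_pos hex]
    exact hex.choose_spec
  -- the eventually-pointed pair
  have hnbfin : ¬ ApproxBot L us (vs ++ segV α N (K+1)) := hgoods (K+1)
  have hgoodfin : ∀ k, ¬ ApproxBot L us ((vs ++ segV α N (K+1)) ++ segV α (N + (K+1)) k) := by
    intro k
    have e : (vs ++ segV α N (K+1)) ++ segV α (N + (K+1)) k = vs ++ segV α N ((K+1) + k) := by
      rw [List.append_assoc, ← segV_add]
    rw [e]
    exact hgoods ((K+1) + k)
  have hptfin : IsPointed L us (vs ++ segV α N (K+1)) := by
    refine ⟨hnbfin, ?_⟩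
    intro w₁ w₂ hsimw hnbw
    by_cases hgw : ∀ k, segV α N k ∈ Sfl L w₁ (w₂ ++ vs)
    · have hmemw : Sfl L w₁ (w₂ ++ vs) ∈
          {T | ∃ p₁ p₂, (SimL L (p₁ ++ p₂) (prefW α N) ∧
            ∀ k, segV α N k ∈ Sfl L p₁ p₂) ∧ T = Sfl L p₁ p₂} := by
        refine ⟨w₁, w₂ ++ vs, ⟨?_, hgw⟩, rfl⟩
        rw [← List.append_assoc]
        exact simL_trans (simL_append_right hsimw vs) hsims
      have hsub : Sfl L w₁ (w₂ ++ vs) ⊆ Sfl L us vs := sfl_mono D hsimw vs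
      have heq : id (Sfl L us vs) = id (Sfl L w₁ (w₂ ++ vs)) := le_antisymm (hmin hmemw hsub) hsub
      simp only [id] at heq
      rw [show w₂ ++ (vs ++ segV α N (K+1)) = (w₂ ++ vs) ++ segV α N (K+1) from
        (List.append_assoc w₂ vs _).symm, sfl_shift, sfl_shift, heq]
    · push_neg at hgw
      exfalso
      obtain ⟨k', hk'le, hk'not⟩ := hK w₁ (w₂ ++ vs) hgw
      have hmem1 : segV α N (K+1) ∈ Sfl L w₁ (w₂ ++ vs) := by
        have hnil : ([] : List A) ∈ Sfl L w₁ (w₂ ++ (vs ++ segV α N (K+1))) :=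
          nil_mem_Sfl_iff.mpr hnbw
        rw [show w₂ ++ (vs ++ segV α N (K+1)) = (w₂ ++ vs) ++ segV α N (K+1) from
          (List.append_assoc w₂ vs _).symm, sfl_shift] at hnil
        simpa using hnil
      have hpre : segV α N k' ∈ Sfl L w₁ (w₂ ++ vs) := by
        have e : segV α N (K+1) = segV α N k' ++ segV α (N + k') (K+1-k') := by
          rw [← segV_add, show k' + (K+1-k') = K+1 from by omega]
        rw [e] at hmem1
        exact sfl_prefix D hmem1
      exact hk'not hpre
  have hptchain : ∀ k, IsPointed L us ((vs ++ segV α N (K+1)) ++ segV α (N + (K+1)) k) := by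
    intro k
    induction k with
    | zero =>
        rw [segV_zero, List.append_nil]
        exact hptfin
    | succ k ih =>
        have e : (vs ++ segV α N (K+1)) ++ segV α (N + (K+1)) (k+1) =
            ((vs ++ segV α N (K+1)) ++ segV α (N + (K+1)) k) ++ [α (N + (K+1) + k)] := by
          rw [segV_succ α (N + (K+1)) k, ← List.append_assoc]
        rw [e]
        refine pointed_extend D ih ?_
        rw [← e]
        exact hgoodfin (k+1)
  -- pointed pairs for every prefix
  choose p1 p2 hpt hsimp using fun u : List A => pointed_exists D u
  -- the run
  refine ⟨_, ?_, (fun n =>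
      if hn : n < N + (K+1) then cls L (p1 (prefW α n)) (p2 (prefW α n)) (hpt _)
      else cls L us ((vs ++ segV α N (K+1)) ++ segV α (N + (K+1)) (n - (N + (K+1))))
        (hptchain (n - (N + (K+1))))),
    (fun n => if n < N + (K+1) then Rk.one else Rk.two), rfl, ?_, N + (K+1), ?_⟩
  · -- initial
    refine ⟨p1 (prefW α 0), p2 (prefW α 0), hpt _, dif_pos (show 0 < N + (K+1) from by omega), ?_⟩
    have hs := hsimp (prefW α 0)
    rwa [prefW_zero] at hs
  · -- transitions
    intro n
    simp only [canonAut, Set.mem_setOf_eq]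
    by_cases hn : n < N + (K+1)
    · -- rank one step
      have hs1 : SimL L ((p1 (prefW α n) ++ p2 (prefW α n)) ++ [α n]) (prefW α (n+1)) := by
        rw [prefW_succ]
        exact simL_append_right (hsimp _) [α n]
      by_cases hn1 : n + 1 < N + (K+1)
      · refine Or.inr ⟨p1 (prefW α n), p2 (prefW α n), p1 (prefW α (n+1)), p2 (prefW α (n+1)),
          hpt _, hpt _, ?_, dif_pos hn, if_pos hn, dif_pos hn1⟩
        exact simL_trans hs1 (simL_symm (hsimp _))
      · have hx : SimL L (us ++ (vs ++ segV α N (K+1))) (prefW α (N + (K+1))) := by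
          rw [← List.append_assoc, prefW_add]
          exact simL_append_right hsims (segV α N (K+1))
        refine Or.inr ⟨p1 (prefW α n), p2 (prefW α n), us,
          (vs ++ segV α N (K+1)) ++ segV α (N + (K+1)) ((n+1) - (N + (K+1))),
          hpt _, hptchain _, ?_, dif_pos hn, if_pos hn, dif_neg hn1⟩
        rw [show (n+1) - (N + (K+1)) = 0 from by omega, segV_zero, List.append_nil]
        rw [show n + 1 = N + (K+1) from by omega] at hs1
        exact simL_trans hs1 (simL_symm hx)
    · -- rank two step
      have hmn : N + (K+1) + (n - (N + (K+1))) = n := by omega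
      have e : (vs ++ segV α N (K+1)) ++ segV α (N + (K+1)) (n - (N + (K+1)) + 1) =
          ((vs ++ segV α N (K+1)) ++ segV α (N + (K+1)) (n - (N + (K+1)))) ++ [α n] := by
        rw [segV_succ α (N + (K+1)) (n - (N + (K+1))), hmn, ← List.append_assoc]
      have h'ext : IsPointed L us
          (((vs ++ segV α N (K+1)) ++ segV α (N + (K+1)) (n - (N + (K+1)))) ++ [α n]) := by
        have hh := hptchain (n - (N + (K+1)) + 1)
        rwa [e] at hh
      have hnbext : ¬ ApproxBot L us
          (((vs ++ segV α N (K+1)) ++ segV α (N + (K+1)) (n - (N + (K+1)))) ++ [α n]) := by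
        have hh := hgoodfin (n - (N + (K+1)) + 1)
        rwa [e] at hh
      refine Or.inl ⟨us, (vs ++ segV α N (K+1)) ++ segV α (N + (K+1)) (n - (N + (K+1))),
        hptchain _, h'ext, hnbext, dif_neg hn, if_neg hn, ?_⟩
      rw [dif_neg (show ¬ (n+1) < N + (K+1) from by omega)]
      refine cls_eq_of_eq _ _ ?_
      rw [show n + 1 - (N + (K+1)) = n - (N + (K+1)) + 1 from by omega, e]
  · -- eventually rank two
    intro n hn
    exact if_neg (by omega)

end Stmt7Complete

/-- the canonical automaton accepts exactly `L`. -/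
theorem stmt7 {A : Type} [Nonempty A] [Fintype A] (L : Set (ℕ → A))
    (hrec : DCWRecognizable L) :
    (canonAut L).Lang = L := by
  classical
  obtain ⟨Q, hF, M, hdet, hL⟩ := hrec
  haveI := hF
  choose t ht htu using hdet.2
  obtain ⟨qI, hqI, hqIu⟩ := hdet.1
  have hinit : M.init = {qI} := Set.eq_singleton_iff_unique_mem.mpr ⟨hqI, hqIu⟩
  have hmem : ∀ q a, (q, a, (t q a).1, (t q a).2) ∈ M.delta := fun q a => ht q a
  have huni : ∀ q a r p, (q, a, r, p) ∈ M.delta → r = (t q a).1 ∧ p = (t q a).2 := by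
    intro q a r p hmem'
    have he := htu q a (r, p) hmem'
    exact ⟨congrArg Prod.fst he, congrArg Prod.snd he⟩
  let D : DetData L Q :=
    ⟨M, fun q a => (t q a).2, fun q a => (t q a).1, qI, hmem, huni, hinit, hL⟩
  exact Set.Subset.antisymm (canon_sound D) (canon_complete D)
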